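/- Let v be a kinetic order for the network N. Then the following are equivalent: (i) N is injective over K_g(N)[v], i.e., for every rate vector κ and every pair of distinct vectors a, b ∈ ℝ^n_{>0} with a − b ∈ Γ one has f_{κ,v}(a) ≠ f_{κ,v}(b); (ii) det(J_c(f̃_{κ,v})) ≠ 0 for all c ∈ ℝ^n_{>0} and all rate vectors κ ∈ ℝ^m_{>0}. -/

import Mathlib

noncomputable section

namespace CRN

variable {n m : ℕ}

/-- The orthogonal complement of a subspace of `Fin n → ℝ` with respect to the
standard scalar product. -/
def orthComp (F : Submodule ℝ (Fin n → ℝ)) : Submodule ℝ (Fin n → ℝ) where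
  carrier := {w | ∀ v ∈ F, ∑ i, w i * v i = 0}
  add_mem' := by
    intro a b ha hb v hv
    have h1 := ha v hv
    have h2 := hb v hv
    have key : ∀ i, (a + b) i * v i = a i * v i + b i * v i := fun i => by
      simp [add_mul]
    calc ∑ i, (a + b) i * v i
        = ∑ i, (a i * v i + b i * v i) := Finset.sum_congr rfl (fun i _ => key i)
      _ = (∑ i, a i * v i) + ∑ i, b i * v i := Finset.sum_add_distrib
      _ = 0 := by rw [h1, h2, add_zero]
  zero_mem' := by
    intro v hv
    simp
  smul_mem' := by
    intro t a ha v hv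
    have h1 := ha v hv
    simp only [Set.mem_setOf_eq, Pi.smul_apply, smul_eq_mul]
    calc ∑ i, t * a i * v i
        = t * ∑ i, a i * v i := by
          rw [Finset.mul_sum]
          exact Finset.sum_congr rfl fun i _ => (mul_assoc _ _ _)
      _ = 0 := by rw [h1, mul_zero]

/-- `ω` is a reduced basis of `F^⊥`: it is a basis of the orthogonal complement of `F`,
`ω i` has `i`-th coordinate `1`, and `j`-th coordinate `0` for every `j < d`, `j ≠ i`. -/
def IsReducedBasis (d : ℕ) (F : Submodule ℝ (Fin n → ℝ)) (ω : Fin d → Fin n → ℝ) : Prop :=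
  (∀ i, ω i ∈ orthComp F) ∧
  Submodule.span ℝ (Set.range ω) = orthComp F ∧
  LinearIndependent ℝ ω ∧
  (∀ (i : Fin d) (j : Fin n), (j : ℕ) = (i : ℕ) → ω i j = 1) ∧
  (∀ (i : Fin d) (j : Fin n), (j : ℕ) < d → (j : ℕ) ≠ (i : ℕ) → ω i j = 0)

/-- The matrix whose top `d` rows are `ω` and whose remaining rows agree with `M`. -/
def tildeMat (d : ℕ) (ω : Fin d → Fin n → ℝ) (M : Matrix (Fin n) (Fin n) ℝ) :
    Matrix (Fin n) (Fin n) ℝ :=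
  Matrix.of fun i j => if h : (i : ℕ) < d then ω ⟨(i : ℕ), h⟩ j else M i j

/-- The stoichiometric matrix: `r`-th column is `y' r - y r`. -/
def stoich (y y' : Fin m → Fin n → ℝ) : Matrix (Fin n) (Fin m) ℝ :=
  Matrix.of fun i r => y' r i - y r i

/-- The stoichiometric subspace: the span of the reaction vectors `y' r - y r`. -/
def stoichSpan (y y' : Fin m → Fin n → ℝ) : Submodule ℝ (Fin n → ℝ) :=
  Submodule.span ℝ (Set.range fun r => (fun i => y' r i - y r i))

/-- The matrix whose `r`-th row is the kinetic-order vector `v r`. -/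
def Zmat (v : Fin m → Fin n → ℝ) : Matrix (Fin m) (Fin n) ℝ :=
  Matrix.of fun r i => v r i

/-- The Jacobian matrix of `f` at `c`. -/
def jac (f : (Fin n → ℝ) → Fin n → ℝ) (c : Fin n → ℝ) : Matrix (Fin n) (Fin n) ℝ :=
  Matrix.of fun i j => fderiv ℝ (fun x => f x i) c (Pi.single j 1)

/-- The species formation rate function of a kinetics `K`. -/
def specForm (y y' : Fin m → Fin n → ℝ) (K : Fin m → (Fin n → ℝ) → ℝ) (c : Fin n → ℝ) :
    Fin n → ℝ :=
  fun i => ∑ r, K r c * (y' r i - y r i)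

/-- The power-law rate functions with rate vector `κ` and kinetic order `v`. -/
def powerLaw (κ : Fin m → ℝ) (v : Fin m → Fin n → ℝ) : Fin m → (Fin n → ℝ) → ℝ :=
  fun r c => κ r * ∏ j, c j ^ v r j

/-- The power-law species formation rate function. -/
def plf (y y' : Fin m → Fin n → ℝ) (κ : Fin m → ℝ) (v : Fin m → Fin n → ℝ) (c : Fin n → ℝ) :
    Fin n → ℝ :=
  fun i => ∑ r, κ r * (∏ j, c j ^ v r j) * (y' r i - y r i)

/-- The extended rate function associated with a reduced basis `ω` and `f`. -/
def tildeF (d : ℕ) (ω : Fin d → Fin n → ℝ) (f : (Fin n → ℝ) → Fin n → ℝ) (c : Fin n → ℝ) :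
    Fin n → ℝ :=
  fun i => if h : (i : ℕ) < d then ∑ j, ω ⟨(i : ℕ), h⟩ j * c j else f c i

/-- The extended rate function with the bottom `s` components negated. -/
def hatF (d : ℕ) (ω : Fin d → Fin n → ℝ) (f : (Fin n → ℝ) → Fin n → ℝ) (c : Fin n → ℝ) :
    Fin n → ℝ :=
  fun i => if h : (i : ℕ) < d then ∑ j, ω ⟨(i : ℕ), h⟩ j * c j else -(f c i)

/-- Membership in the positive orthant. -/
def Pos (c : Fin n → ℝ) : Prop := ∀ i, 0 < c i

/-- The network is injective over the power-law kinetics with fixed kinetic order `v`. -/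
def InjOverPL (y y' : Fin m → Fin n → ℝ) (v : Fin m → Fin n → ℝ) : Prop :=
  ∀ κ : Fin m → ℝ, (∀ r, 0 < κ r) → ∀ a b : Fin n → ℝ, Pos a → Pos b → a ≠ b →
    a - b ∈ stoichSpan y y' → plf y y' κ v a ≠ plf y y' κ v b

/-- An influence specification takes values in `{-1, 0, 1}`. -/
def IsInfluence (I : Fin m → Fin n → ℝ) : Prop := ∀ r i, I r i = -1 ∨ I r i = 0 ∨ I r i = 1

/-- The influence specification associated with a kinetic order `v`. -/
def infOf (v : Fin m → Fin n → ℝ) : Fin m → Fin n → ℝ := fun r i => Real.sign (v r i)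

/-- `v ∈ Σ(I)`: the kinetic order `v` has associated influence specification `I`. -/
def InSigma (I : Fin m → Fin n → ℝ) (v : Fin m → Fin n → ℝ) : Prop :=
  ∀ r i, Real.sign (v r i) = I r i

/-- The partial order `I' ≼ I` on influence specifications. -/
def Preceq (I' I : Fin m → Fin n → ℝ) : Prop :=
  ∀ r i, (I' r i = 1 → I r i = 1) ∧ (I' r i = -1 → I r i = -1)

/-- The matrix `M̃(v)`: top `d` rows `ω`, bottom rows from `A ⬝ Z(v)`. -/
def Mt (y y' : Fin m → Fin n → ℝ) (d : ℕ) (ω : Fin d → Fin n → ℝ)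
    (v : Fin m → Fin n → ℝ) : Matrix (Fin n) (Fin n) ℝ :=
  tildeMat d ω (stoich y y' * Zmat v)

/-- The influence specification `I` has a signed determinant. -/
def SignedDet (y y' : Fin m → Fin n → ℝ) (d : ℕ) (ω : Fin d → Fin n → ℝ)
    (I : Fin m → Fin n → ℝ) : Prop :=
  ∀ v w, InSigma I v → InSigma I w →
    Real.sign (Mt y y' d ω v).det = Real.sign (Mt y y' d ω w).det

/-- The influence specification `I` is sign-nonsingular (SNS). -/
def IsSNS (y y' : Fin m → Fin n → ℝ) (d : ℕ) (ω : Fin d → Fin n → ℝ)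
    (I : Fin m → Fin n → ℝ) : Prop :=
  SignedDet y y' d ω I ∧ ∀ v, InSigma I v → (Mt y y' d ω v).det ≠ 0

/-- `Ω` is an admissible kinetics domain: `ℝ^n_{>0} ⊆ Ω ⊆ ℝ^n_{≥0}`. -/
def KinDom (Ω : Set (Fin n → ℝ)) : Prop :=
  {c : Fin n → ℝ | ∀ i, 0 < c i} ⊆ Ω ∧ Ω ⊆ {c : Fin n → ℝ | ∀ i, 0 ≤ c i}

/-- The rate functions are nonnegative on the domain. -/
def KinNonneg (Ω : Set (Fin n → ℝ)) (K : Fin m → (Fin n → ℝ) → ℝ) : Prop :=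
  ∀ r, ∀ c ∈ Ω, 0 ≤ K r c

/-- `I_r^+ ⊆ supp c`. -/
def PosSupp (I : Fin m → Fin n → ℝ) (r : Fin m) (c : Fin n → ℝ) : Prop :=
  ∀ i, I r i = 1 → c i ≠ 0

/-- The kinetics `K` respects the influence specification `I`. -/
def Respects (Ω : Set (Fin n → ℝ)) (K : Fin m → (Fin n → ℝ) → ℝ)
    (I : Fin m → Fin n → ℝ) : Prop :=
  ∀ c ∈ Ω, ∀ r, (0 < K r c ↔ PosSupp I r c)

/-- The kinetics `K` is strictly monotonic with respect to `I`. -/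
def StrictlyMonotonic (Ω : Set (Fin n → ℝ)) (K : Fin m → (Fin n → ℝ) → ℝ)
    (I : Fin m → Fin n → ℝ) : Prop :=
  Respects Ω K I ∧
  ∀ (r : Fin m) (c d : Fin n → ℝ), c ∈ Ω → d ∈ Ω → PosSupp I r c → PosSupp I r d →
    ∀ i, (∀ j, j ≠ i → c j = d j) →
      ((I r i = 1 → c i < d i → K r c < K r d) ∧
       (I r i = -1 → c i < d i → K r d < K r c) ∧
       (I r i = 0 → K r c = K r d))

/-- The kinetics `K` is differentiable with respect to `I`. -/
def DiffWrt (Ω : Set (Fin n → ℝ)) (K : Fin m → (Fin n → ℝ) → ℝ)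
    (I : Fin m → Fin n → ℝ) : Prop :=
  Respects Ω K I ∧
  (∀ r, ∀ c ∈ Ω, ContinuousWithinAt (K r) Ω c) ∧
  (∀ (r : Fin m) (c : Fin n → ℝ), (∀ i, 0 < c i) → DifferentiableAt ℝ (K r) c) ∧
  (∀ (r : Fin m) (c : Fin n → ℝ), (∀ i, 0 < c i) → ∀ i,
     Real.sign (fderiv ℝ (K r) c (Pi.single i 1)) = I r i)

/-- `a` and `b` are non-overlapping with respect to `I`. -/
def NonOverlap (I : Fin m → Fin n → ℝ) (a b : Fin n → ℝ) : Prop :=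
  ∀ r, ¬ PosSupp I r a → PosSupp I r b

/-- The kinetics `K` is weakly monotonic with respect to `I`. -/
def WeaklyMonotonic (y : Fin m → Fin n → ℝ) (Ω : Set (Fin n → ℝ))
    (K : Fin m → (Fin n → ℝ) → ℝ) (I : Fin m → Fin n → ℝ) : Prop :=
  ∀ a ∈ Ω, ∀ b ∈ Ω, NonOverlap I a b → ∀ r,
    (K r b < K r a → ∃ i, Real.sign (a i - b i) = I r i ∧ I r i ≠ 0) ∧
    (K r a = K r b →
      ((∀ i, y r i ≠ 0 → a i = b i) ∨
        ∃ i j, i ≠ j ∧ Real.sign (a i - b i) = I r i ∧ I r i ≠ 0 ∧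
          Real.sign (a j - b j) = -(I r j) ∧ I r j ≠ 0))

/-- A square real matrix is a P-matrix: all principal minors are positive. -/
def IsPMatrix {N : ℕ} (M : Matrix (Fin N) (Fin N) ℝ) : Prop :=
  ∀ J : Finset (Fin N),
    0 < (M.submatrix (fun i : {x // x ∈ J} => (i : Fin N))
          (fun j : {x // x ∈ J} => (j : Fin N))).det

/-- The minor `det(A_{J,C})` of the stoichiometric matrix. -/
def subDetA (y y' : Fin m → Fin n → ℝ) (s : ℕ) (J : Finset (Fin n)) (C : Finset (Fin m))
    (hJ : J.card = s) (hC : C.card = s) : ℝ :=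
  ((stoich y y').submatrix (fun a => (J.orderIsoOfFin hJ a).1)
    (fun b => (C.orderIsoOfFin hC b).1)).det

/-- The minor `det(Z(v)_{C,J})`. -/
def subDetZ (v : Fin m → Fin n → ℝ) (s : ℕ) (C : Finset (Fin m)) (J : Finset (Fin n))
    (hC : C.card = s) (hJ : J.card = s) : ℝ :=
  ((Zmat v).submatrix (fun a => (C.orderIsoOfFin hC a).1)
    (fun b => (J.orderIsoOfFin hJ b).1)).det

/-- The Hill-type species formation rate function. -/
def hillf (y y' : Fin m → Fin n → ℝ) (κ : Fin m → ℝ) (δ v : Fin m → Fin n → ℝ)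
    (c : Fin n → ℝ) : Fin n → ℝ :=
  fun i => ∑ r, κ r * (∏ j, (c j ^ v r j) / (δ r j + c j ^ v r j)) * (y' r i - y r i)


section Stmt3Aux

open Finset

variable {n m : ℕ}

private def gfun (t : ℝ) : ℝ := if t = 0 then 1 else (Real.exp t - 1) / t

private lemma gfun_pos (t : ℝ) : 0 < gfun t := by
  unfold gfun
  split_ifs with h
  · norm_num
  · rcases lt_or_gt_of_ne h with h1 | h1
    · have h2 : Real.exp t < 1 := Real.exp_lt_one_iff.mpr h1
      exact div_pos_of_neg_of_neg (by linarith) h1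
    · have h2 : 1 < Real.exp t := by
        have := Real.exp_lt_exp.mpr h1
        simpa using this
      exact div_pos (by linarith) h1

private lemma mul_gfun (t : ℝ) : t * gfun t = Real.exp t - 1 := by
  unfold gfun
  split_ifs with h
  · simp [h]
  · field_simp

private lemma prod_rpow_pos (c : Fin n → ℝ) (hc : ∀ i, 0 < c i) (p : Fin n → ℝ) :
    0 < ∏ l, c l ^ p l :=
  Finset.prod_pos fun l _ => Real.rpow_pos_of_pos (hc l) _

private lemma prod_rpow_eq_exp (c : Fin n → ℝ) (hc : ∀ i, 0 < c i) (p : Fin n → ℝ) :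
    ∏ l, c l ^ p l = Real.exp (∑ l, p l * Real.log (c l)) := by
  rw [Real.exp_sum]
  exact Finset.prod_congr rfl fun l _ => by
    rw [Real.rpow_def_of_pos (hc l), mul_comm]

private lemma prod_sub_eq (a b : Fin n → ℝ) (ha : ∀ i, 0 < a i) (hb : ∀ i, 0 < b i)
    (p : Fin n → ℝ) :
    (∏ l, a l ^ p l) - ∏ l, b l ^ p l
      = (∏ l, b l ^ p l) * gfun (∑ l, p l * (Real.log (a l) - Real.log (b l)))
          * (∑ l, p l * (Real.log (a l) - Real.log (b l))) := by
  set T := ∑ l, p l * (Real.log (a l) - Real.log (b l)) with hT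
  have h1 : ∑ l, p l * Real.log (a l) = (∑ l, p l * Real.log (b l)) + T := by
    rw [hT, ← Finset.sum_add_distrib]
    exact Finset.sum_congr rfl fun l _ => by ring
  rw [prod_rpow_eq_exp a ha, prod_rpow_eq_exp b hb, h1, Real.exp_add]
  have h2 : T * gfun T = Real.exp T - 1 := mul_gfun T
  linear_combination (-Real.exp (∑ l, p l * Real.log (b l))) * h2

private lemma plf_sub (y y' : Fin m → Fin n → ℝ) (κ : Fin m → ℝ) (v : Fin m → Fin n → ℝ)
    (a b : Fin n → ℝ) (i : Fin n) :
    plf y y' κ v a i - plf y y' κ v b i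
      = ∑ r, κ r * ((∏ l, a l ^ v r l) - ∏ l, b l ^ v r l) * (y' r i - y r i) := by
  unfold plf
  rw [← Finset.sum_sub_distrib]
  exact Finset.sum_congr rfl fun r _ => by ring

private lemma mem_orthComp {F : Submodule ℝ (Fin n → ℝ)} {x : Fin n → ℝ} :
    x ∈ orthComp F ↔ ∀ v ∈ F, ∑ i, x i * v i = 0 := Iff.rfl

private lemma mem_orthComp_span (S : Set (Fin n → ℝ)) (x : Fin n → ℝ)
    (h : ∀ s ∈ S, ∑ i, x i * s i = 0) : x ∈ orthComp (Submodule.span ℝ S) := by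
  rw [mem_orthComp]
  intro w hw
  induction hw using Submodule.span_induction with
  | mem u hu => exact h u hu
  | zero => simp
  | add u w _ _ hu hw =>
      have : ∑ i, x i * (u + w) i = (∑ i, x i * u i) + ∑ i, x i * w i := by
        rw [← Finset.sum_add_distrib]
        exact Finset.sum_congr rfl fun i _ => by simp [mul_add]
      rw [this, hu, hw, add_zero]
  | smul t u _ hu =>
      have : ∑ i, x i * (t • u) i = t * ∑ i, x i * u i := by
        rw [Finset.mul_sum]
        exact Finset.sum_congr rfl fun i _ => by
          simp [Pi.smul_apply, smul_eq_mul]; ring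
      rw [this, hu, mul_zero]

private lemma orthComp_eq_map (F : Submodule ℝ (Fin n → ℝ)) :
    orthComp F
      = ((F.comap ((WithLp.linearEquiv 2 ℝ (Fin n → ℝ)) :
            EuclideanSpace ℝ (Fin n) →ₗ[ℝ] (Fin n → ℝ)))ᗮ).map
          ((WithLp.linearEquiv 2 ℝ (Fin n → ℝ)) :
            EuclideanSpace ℝ (Fin n) →ₗ[ℝ] (Fin n → ℝ)) := by
  have hinner : ∀ (u w : EuclideanSpace ℝ (Fin n)),
      (inner ℝ u w : ℝ) = ∑ i, w i * u i := by
    intro u w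
    rw [PiLp.inner_apply]
    exact Finset.sum_congr rfl fun i _ => by
      simp [RCLike.inner_apply]
  ext x
  rw [Submodule.mem_map_equiv, Submodule.mem_orthogonal, mem_orthComp]
  constructor
  · intro hx u hu
    rw [hinner]
    exact hx ((WithLp.linearEquiv 2 ℝ (Fin n → ℝ)) u) (Submodule.mem_comap.mp hu)
  · intro hx v hv
    have h1 : ((WithLp.linearEquiv 2 ℝ (Fin n → ℝ)).symm v) ∈
        F.comap ((WithLp.linearEquiv 2 ℝ (Fin n → ℝ)) :
          EuclideanSpace ℝ (Fin n) →ₗ[ℝ] (Fin n → ℝ)) := by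
      rw [Submodule.mem_comap]
      simpa using hv
    have h2 := hx _ h1
    rw [hinner] at h2
    exact h2

private lemma orthComp_orthComp (F : Submodule ℝ (Fin n → ℝ)) :
    orthComp (orthComp F) = F := by
  have hinj : Function.Injective ((WithLp.linearEquiv 2 ℝ (Fin n → ℝ) :
      EuclideanSpace ℝ (Fin n) ≃ₗ[ℝ] (Fin n → ℝ)) :
      EuclideanSpace ℝ (Fin n) →ₗ[ℝ] (Fin n → ℝ)) :=
    (WithLp.linearEquiv 2 ℝ (Fin n → ℝ)).injective
  have hsurj : Function.Surjective ((WithLp.linearEquiv 2 ℝ (Fin n → ℝ) :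
      EuclideanSpace ℝ (Fin n) ≃ₗ[ℝ] (Fin n → ℝ)) :
      EuclideanSpace ℝ (Fin n) →ₗ[ℝ] (Fin n → ℝ)) :=
    (WithLp.linearEquiv 2 ℝ (Fin n → ℝ)).surjective
  rw [orthComp_eq_map (orthComp F), orthComp_eq_map F,
    Submodule.comap_map_eq_of_injective hinj, Submodule.orthogonal_orthogonal,
    Submodule.map_comap_eq_of_surjective hsurj]

private lemma reduced_zero {d : ℕ} {F : Submodule ℝ (Fin n → ℝ)} {ω : Fin d → Fin n → ℝ}
    (hω : IsReducedBasis d F ω) {w : Fin n → ℝ} (hwF : w ∈ F)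
    (hw : ∀ i : Fin n, d ≤ (i : ℕ) → w i = 0) : w = 0 := by
  funext i
  by_cases hi : (i : ℕ) < d
  · have h0 : ∑ j, ω ⟨(i : ℕ), hi⟩ j * w j = 0 := (hω.1 ⟨(i : ℕ), hi⟩) w hwF
    have h1 : ∑ j, ω ⟨(i : ℕ), hi⟩ j * w j = w i := by
      rw [Finset.sum_eq_single i]
      · rw [hω.2.2.2.1 ⟨(i : ℕ), hi⟩ i rfl, one_mul]
      · intro j _ hj
        by_cases hjd : (j : ℕ) < d
        · rw [hω.2.2.2.2 ⟨(i : ℕ), hi⟩ j hjd (fun h => hj (Fin.ext h)), zero_mul]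
        · rw [hw j (le_of_not_gt hjd), mul_zero]
      · simp
    rw [h1] at h0
    simpa using h0
  · simpa using hw i (le_of_not_gt hi)

private lemma mem_of_orth_basis {d : ℕ} {F : Submodule ℝ (Fin n → ℝ)}
    {ω : Fin d → Fin n → ℝ}
    (hspan : Submodule.span ℝ (Set.range ω) = orthComp F) {x : Fin n → ℝ}
    (hx : ∀ i : Fin d, ∑ j, ω i j * x j = 0) : x ∈ F := by
  have h1 : x ∈ orthComp (Submodule.span ℝ (Set.range ω)) := by
    apply mem_orthComp_span
    rintro s ⟨i, rfl⟩
    rw [show ∑ j, x j * ω i j = ∑ j, ω i j * x j from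
      Finset.sum_congr rfl fun j _ => mul_comm _ _]
    exact hx i
  rw [hspan] at h1
  rw [← orthComp_orthComp F]
  exact h1

private lemma comb_mem_stoichSpan (y y' : Fin m → Fin n → ℝ) (t : Fin m → ℝ) :
    (fun i => ∑ r, t r * (y' r i - y r i)) ∈ stoichSpan y y' := by
  have h : (fun i => ∑ r, t r * (y' r i - y r i))
      = ∑ r, t r • (fun i => y' r i - y r i) := by
    funext i
    rw [Finset.sum_apply]
    exact Finset.sum_congr rfl fun r _ => rfl
  rw [h]
  exact Submodule.sum_mem _ fun r _ =>
    Submodule.smul_mem _ _ (Submodule.subset_span ⟨r, rfl⟩)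

private lemma jac_tildeF_eq (d : ℕ) (ω : Fin d → Fin n → ℝ)
    (y y' : Fin m → Fin n → ℝ) (κ : Fin m → ℝ) (v : Fin m → Fin n → ℝ)
    (c : Fin n → ℝ) (hc : ∀ i, 0 < c i) :
    jac (tildeF d ω (plf y y' κ v)) c = Matrix.of fun (i j : Fin n) =>
      if h : (i : ℕ) < d then ω ⟨(i : ℕ), h⟩ j
      else ∑ r, κ r * (∏ l, c l ^ v r l) * (v r j / c j) * (y' r i - y r i) := by
  ext i j
  simp only [jac, Matrix.of_apply]
  by_cases hi : (i : ℕ) < d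
  · rw [dif_pos hi]
    have hfun : (fun x => tildeF d ω (plf y y' κ v) x i)
        = fun x : Fin n → ℝ => ∑ l, ω ⟨(i : ℕ), hi⟩ l * x l := by
      funext x
      simp [tildeF, hi]
    rw [hfun]
    have hder : HasFDerivAt (fun x : Fin n → ℝ => ∑ l, ω ⟨(i : ℕ), hi⟩ l * x l)
        (∑ l, ω ⟨(i : ℕ), hi⟩ l • ContinuousLinearMap.proj (R := ℝ) (φ := fun _ : Fin n => ℝ) l) c :=
      HasFDerivAt.fun_sum fun l _ =>
        (ContinuousLinearMap.proj (R := ℝ) (φ := fun _ : Fin n => ℝ) l).hasFDerivAt.const_mul (ω ⟨(i : ℕ), hi⟩ l)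
    rw [hder.fderiv]
    simp [ContinuousLinearMap.proj_apply, Pi.single_apply]
  · rw [dif_neg hi]
    have hfun : (fun x => tildeF d ω (plf y y' κ v) x i)
        = fun x : Fin n → ℝ => ∑ r, κ r * (∏ l, x l ^ v r l) * (y' r i - y r i) := by
      funext x
      simp [tildeF, plf, hi]
    rw [hfun]
    have hprod : ∀ r : Fin m, HasFDerivAt (fun x : Fin n → ℝ => ∏ l, x l ^ v r l)
        (∑ l, (∏ k ∈ Finset.univ.erase l, c k ^ v r k) •
          ((v r l * c l ^ (v r l - 1)) • ContinuousLinearMap.proj (R := ℝ) (φ := fun _ : Fin n => ℝ) l)) c := by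
      intro r
      exact HasFDerivAt.finset_prod fun l _ => by
        have h := (Real.hasDerivAt_rpow_const (x := c l) (p := v r l) (Or.inl (hc l).ne')).comp_hasFDerivAt c
          (ContinuousLinearMap.proj (R := ℝ) (φ := fun _ : Fin n => ℝ) l).hasFDerivAt
        exact h
    have hder : HasFDerivAt
        (fun x : Fin n → ℝ => ∑ r, κ r * (∏ l, x l ^ v r l) * (y' r i - y r i))
        (∑ r, (y' r i - y r i) • (κ r • (∑ l, (∏ k ∈ Finset.univ.erase l, c k ^ v r k) •
          ((v r l * c l ^ (v r l - 1)) • ContinuousLinearMap.proj (R := ℝ) (φ := fun _ : Fin n => ℝ) l)))) c :=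
      HasFDerivAt.fun_sum fun r _ => ((hprod r).const_mul (κ r)).mul_const (y' r i - y r i)
    rw [hder.fderiv]
    simp only [ContinuousLinearMap.coe_sum', Finset.sum_apply,
      ContinuousLinearMap.coe_smul', Pi.smul_apply, ContinuousLinearMap.proj_apply,
      Pi.single_apply, smul_eq_mul]
    refine Finset.sum_congr rfl fun r _ => ?_
    rw [Finset.sum_eq_single j]
    · have hpr : (∏ l, c l ^ v r l)
          = (∏ k ∈ Finset.univ.erase j, c k ^ v r k) * c j ^ v r j :=
        (Finset.prod_erase_mul _ _ (Finset.mem_univ j)).symm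
      rw [Real.rpow_sub_one (hc j).ne', hpr]
      have hcj : c j ≠ 0 := (hc j).ne'
      field_simp
      simp only [if_true]
      ring
    · intro l _ hl
      simp [hl]
    · simp

private lemma mulVec_row (κ : Fin m → ℝ) (v : Fin m → Fin n → ℝ)
    (y y' : Fin m → Fin n → ℝ) (c x : Fin n → ℝ) (i : Fin n) :
    ∑ j, (∑ r, κ r * (∏ l, c l ^ v r l) * (v r j / c j) * (y' r i - y r i)) * x j
      = ∑ r, κ r * (∏ l, c l ^ v r l) * (∑ j, v r j * (x j / c j)) * (y' r i - y r i) := by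
  have h1 : ∀ j : Fin n,
      (∑ r, κ r * (∏ l, c l ^ v r l) * (v r j / c j) * (y' r i - y r i)) * x j
        = ∑ r, κ r * (∏ l, c l ^ v r l) * (v r j / c j) * (y' r i - y r i) * x j :=
    fun j => Finset.sum_mul _ _ _
  rw [Finset.sum_congr rfl fun j _ => h1 j, Finset.sum_comm]
  refine Finset.sum_congr rfl fun r _ => ?_
  rw [Finset.mul_sum, Finset.sum_mul]
  exact Finset.sum_congr rfl fun j _ => by ring

end Stmt3Aux


/-- Theorem `injecclose-pl`. -/
theorem stmt3 {n m s : ℕ} (d : ℕ) (hd : d = n - s)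
    (y y' : Fin m → Fin n → ℝ)
    (hs : Module.finrank ℝ (stoichSpan y y') = s)
    (ω : Fin d → Fin n → ℝ)
    (hω : IsReducedBasis d (stoichSpan y y') ω)
    (v : Fin m → Fin n → ℝ) :
    InjOverPL y y' v ↔
      ∀ (c : Fin n → ℝ), (∀ i, 0 < c i) → ∀ κ : Fin m → ℝ, (∀ r, 0 < κ r) →
        (jac (tildeF d ω (plf y y' κ v)) c).det ≠ 0 := by
  classical
  have hdn : d ≤ n := by omega
  constructor
  · -- injective implies nonsingular Jacobian
    intro hinj c hc κ hκ hdet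
    rw [jac_tildeF_eq d ω y y' κ v c hc] at hdet
    obtain ⟨x, hx0, hker⟩ := Matrix.exists_mulVec_eq_zero_iff.mpr hdet
    obtain ⟨μ, hμ⟩ : ∃ μ : Fin n → ℝ, ∀ j, μ j = x j / c j := ⟨_, fun j => rfl⟩
    obtain ⟨b, hbdef⟩ : ∃ b : Fin n → ℝ, ∀ j, b j = c j / gfun (μ j) := ⟨_, fun j => rfl⟩
    obtain ⟨a, hadef⟩ : ∃ a : Fin n → ℝ, ∀ j, a j = b j * Real.exp (μ j) := ⟨_, fun j => rfl⟩
    have hb : ∀ j, 0 < b j := fun j => by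
      rw [hbdef j]; exact div_pos (hc j) (gfun_pos _)
    have ha : ∀ j, 0 < a j := fun j => by
      rw [hadef j]; exact mul_pos (hb j) (Real.exp_pos _)
    have hab : ∀ j, a j - b j = x j := by
      intro j
      have hG : gfun (μ j) ≠ 0 := (gfun_pos _).ne'
      have h2 : c j / gfun (μ j) * (μ j * gfun (μ j)) = c j * μ j := by
        field_simp
      calc a j - b j = b j * (Real.exp (μ j) - 1) := by rw [hadef j]; ring
        _ = b j * (μ j * gfun (μ j)) := by rw [mul_gfun]
        _ = c j / gfun (μ j) * (μ j * gfun (μ j)) := by rw [hbdef j]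
        _ = c j * μ j := h2
        _ = c j * (x j / c j) := by rw [hμ j]
        _ = x j := by rw [mul_comm, div_mul_cancel₀ _ (hc j).ne']
    have haneb : a ≠ b := by
      intro h
      apply hx0
      funext j
      show x j = 0
      rw [← hab j, h, sub_self]
    have hlog : ∀ j, Real.log (a j) - Real.log (b j) = μ j := by
      intro j
      rw [hadef j, Real.log_mul (hb j).ne' (Real.exp_pos _).ne', Real.log_exp]
      ring
    have hker' : ∀ i : Fin n, ∑ j, (if h : (i : ℕ) < d then ω ⟨(i : ℕ), h⟩ j
        else ∑ r, κ r * (∏ l, c l ^ v r l) * (v r j / c j) * (y' r i - y r i)) * x j = 0 := by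
      intro i
      have h := congrFun hker i
      simpa [Matrix.mulVec, dotProduct] using h
    have htop : ∀ i : Fin d, ∑ j, ω i j * x j = 0 := by
      intro i
      have hi : ((⟨(i : ℕ), lt_of_lt_of_le i.2 hdn⟩ : Fin n) : ℕ) < d := i.2
      have h := hker' ⟨(i : ℕ), lt_of_lt_of_le i.2 hdn⟩
      simp only [dif_pos hi] at h
      exact h
    have hxΓ : x ∈ stoichSpan y y' := mem_of_orth_basis hω.2.1 htop
    obtain ⟨T, hT⟩ : ∃ T : Fin m → ℝ, ∀ r, T r = ∑ l, v r l * μ l := ⟨_, fun r => rfl⟩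
    obtain ⟨κ', hκ'def⟩ : ∃ κ' : Fin m → ℝ, ∀ r, κ' r
        = κ r * (∏ l, c l ^ v r l) / ((∏ l, b l ^ v r l) * gfun (T r)) := ⟨_, fun r => rfl⟩
    have hκ' : ∀ r, 0 < κ' r := fun r => by
      rw [hκ'def r]
      exact div_pos (mul_pos (hκ r) (prod_rpow_pos c hc _))
        (mul_pos (prod_rpow_pos b hb _) (gfun_pos _))
    obtain ⟨w, hwdef⟩ : ∃ w : Fin n → ℝ, ∀ i, w i
        = ∑ r, κ r * (∏ l, c l ^ v r l) * T r * (y' r i - y r i) := ⟨_, fun i => rfl⟩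
    have hwΓ : w ∈ stoichSpan y y' := by
      have h := comb_mem_stoichSpan y y' (fun r => κ r * (∏ l, c l ^ v r l) * T r)
      have h2 : w = fun i => ∑ r, κ r * (∏ l, c l ^ v r l) * T r * (y' r i - y r i) :=
        funext fun i => hwdef i
      rw [h2]
      exact h
    have hwbot : ∀ i : Fin n, d ≤ (i : ℕ) → w i = 0 := by
      intro i hi
      have h := hker' i
      simp only [dif_neg (not_lt.mpr hi)] at h
      rw [mulVec_row] at h
      rw [hwdef i, ← h]
      refine Finset.sum_congr rfl fun r _ => ?_
      have h3 : T r = ∑ j, v r j * (x j / c j) := by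
        rw [hT r]
        exact Finset.sum_congr rfl fun l _ => by rw [hμ l]
      rw [h3]
    have hw0 : w = 0 := reduced_zero hω hwΓ hwbot
    have hdiff : ∀ i, plf y y' κ' v a i - plf y y' κ' v b i = w i := by
      intro i
      rw [plf_sub, hwdef i]
      refine Finset.sum_congr rfl fun r _ => ?_
      rw [prod_sub_eq a b ha hb]
      have hTr : ∑ l, v r l * (Real.log (a l) - Real.log (b l)) = T r := by
        rw [hT r]
        exact Finset.sum_congr rfl fun l _ => by rw [hlog l]
      rw [hTr, hκ'def r]
      have hPb : (∏ l, b l ^ v r l) ≠ 0 := (prod_rpow_pos b hb _).ne'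
      have hG : gfun (T r) ≠ 0 := (gfun_pos _).ne'
      field_simp
    have heq : plf y y' κ' v a = plf y y' κ' v b := by
      funext i
      have h := hdiff i
      rw [hw0] at h
      simpa [sub_eq_zero] using h
    have hΓ' : a - b ∈ stoichSpan y y' := by
      have h : a - b = x := funext fun j => hab j
      rw [h]
      exact hxΓ
    exact hinj κ' hκ' a b ha hb haneb hΓ' heq
  · -- nonsingular Jacobian implies injective
    intro hdet κ hκ a b ha hb hne hΓ hfeq
    obtain ⟨x, hxd⟩ : ∃ x : Fin n → ℝ, ∀ j, x j = a j - b j := ⟨_, fun j => rfl⟩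
    have hx' : x = a - b := funext fun j => hxd j
    have hx0 : x ≠ 0 := by
      intro h
      apply hne
      funext j
      have h1 : x j = 0 := by rw [h]; rfl
      rw [hxd j] at h1
      linarith
    obtain ⟨μ, hμ⟩ : ∃ μ : Fin n → ℝ, ∀ j, μ j = Real.log (a j) - Real.log (b j) :=
      ⟨_, fun j => rfl⟩
    obtain ⟨c, hcdef⟩ : ∃ c : Fin n → ℝ, ∀ j, c j = if a j = b j then a j else x j / μ j :=
      ⟨_, fun j => rfl⟩
    have hμ0 : ∀ j, a j ≠ b j → μ j ≠ 0 := by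
      intro j hj h0
      apply hj
      rw [hμ j] at h0
      have hl : Real.log (a j) = Real.log (b j) := by linarith
      calc a j = Real.exp (Real.log (a j)) := (Real.exp_log (ha j)).symm
        _ = b j := by rw [hl]; exact Real.exp_log (hb j)
    have hc : ∀ j, 0 < c j := by
      intro j
      rw [hcdef j]
      by_cases hj : a j = b j
      · rw [if_pos hj]
        exact ha j
      · rw [if_neg hj]
        rcases lt_or_gt_of_ne hj with h1 | h1
        · exact div_pos_of_neg_of_neg (by rw [hxd j]; linarith)
            (by rw [hμ j]; have := Real.log_lt_log (ha j) h1; linarith)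
        · exact div_pos (by rw [hxd j]; linarith)
            (by rw [hμ j]; have := Real.log_lt_log (hb j) h1; linarith)
    have hxc : ∀ j, x j / c j = μ j := by
      intro j
      by_cases hj : a j = b j
      · have h1 : x j = 0 := by rw [hxd j, hj, sub_self]
        have h2 : μ j = 0 := by rw [hμ j, hj, sub_self]
        rw [h1, h2, zero_div]
      · have hxj : x j ≠ 0 := by rw [hxd j]; exact sub_ne_zero.mpr hj
        have hμj := hμ0 j hj
        rw [hcdef j, if_neg hj]
        field_simp
    obtain ⟨T, hT⟩ : ∃ T : Fin m → ℝ, ∀ r, T r = ∑ l, v r l * μ l := ⟨_, fun r => rfl⟩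
    obtain ⟨κ', hκ'def⟩ : ∃ κ' : Fin m → ℝ, ∀ r, κ' r
        = κ r * (∏ l, b l ^ v r l) * gfun (T r) / (∏ l, c l ^ v r l) := ⟨_, fun r => rfl⟩
    have hκ' : ∀ r, 0 < κ' r := fun r => by
      rw [hκ'def r]
      exact div_pos (mul_pos (mul_pos (hκ r) (prod_rpow_pos b hb _)) (gfun_pos _))
        (prod_rpow_pos c hc _)
    have hdet' := hdet c hc κ' hκ'
    rw [jac_tildeF_eq d ω y y' κ' v c hc] at hdet'
    apply hdet'
    apply Matrix.exists_mulVec_eq_zero_iff.mp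
    refine ⟨x, hx0, ?_⟩
    funext i
    simp only [Matrix.mulVec, dotProduct, Matrix.of_apply, Pi.zero_apply]
    by_cases hi : (i : ℕ) < d
    · simp only [dif_pos hi]
      exact (hω.1 ⟨(i : ℕ), hi⟩) x (hx' ▸ hΓ)
    · simp only [dif_neg hi]
      rw [mulVec_row]
      have hstep : ∀ r : Fin m,
          κ' r * (∏ l, c l ^ v r l) * (∑ j, v r j * (x j / c j)) * (y' r i - y r i)
            = κ r * ((∏ l, a l ^ v r l) - ∏ l, b l ^ v r l) * (y' r i - y r i) := by
        intro r
        have hS : ∑ j, v r j * (x j / c j) = T r := by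
          rw [hT r]
          exact Finset.sum_congr rfl fun j _ => by rw [hxc j]
        rw [hS, prod_sub_eq a b ha hb]
        have hTr : ∑ l, v r l * (Real.log (a l) - Real.log (b l)) = T r := by
          rw [hT r]
          exact Finset.sum_congr rfl fun l _ => by rw [hμ l]
        rw [hTr, hκ'def r]
        have hPc : (∏ l, c l ^ v r l) ≠ 0 := (prod_rpow_pos c hc _).ne'
        rw [div_mul_cancel₀ _ hPc]
        ring
      rw [Finset.sum_congr rfl fun r _ => hstep r, ← plf_sub y y' κ v a b i,
        congrFun hfeq i, sub_self]

end CRN
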